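/- arXiv:1908.02245 — 4 statements merged into one kernel-verified Lean document; each statement's English description precedes it below -/
import Mathlib

section
/- Let A, B, C be rings, let i^* : mod B → mod A, i_* : mod A → mod B, i^! : mod B → mod A be additive functors such that (i^*, i_*) and (i_*, i^!) are adjoint pairs and i_* is fully faithful, and let J : mod C → mod B be a fully faithful additive functor such that i^*(J(Y)) ≅ 0 and i^!(J(Y)) ≅ 0 for every Y in mod C. If 𝒮_L is a semibrick in mod A and 𝒮_R is a semibrick in mod C, then the union i_*(𝒮_L) ∪ J(𝒮_R) = {i_*(S) : S ∈ 𝒮_L} ∪ {J(S) : S ∈ 𝒮_R} is a semibrick in mod B. -/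
open CategoryTheory CategoryTheory.Limits

universe v u₁ u₂ u₃

/-- A module `S` is a *brick* if its endomorphism ring is a division ring, i.e.
it is nontrivial (`𝟙 S ≠ 0`) and every nonzero endomorphism is invertible. -/
def IsBrick {R : Type u₁} [Ring R] (S : ModuleCat.{v} R) : Prop :=
  𝟙 S ≠ 0 ∧ ∀ f : S ⟶ S, f ≠ 0 → IsIso f

/-- A set of modules is a *semibrick* if every member is a brick and there is no nonzero
homomorphism between non-isomorphic members. -/
def IsSemibrick {R : Type u₁} [Ring R] (𝒮 : Set (ModuleCat.{v} R)) : Prop :=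
  (∀ S ∈ 𝒮, IsBrick S) ∧
    ∀ S₁ ∈ 𝒮, ∀ S₂ ∈ 𝒮, ¬ Nonempty (S₁ ≅ S₂) → ∀ f : S₁ ⟶ S₂, f = 0

/-- A fully faithful additive functor preserves bricks. -/
theorem IsBrick.map {R₁ : Type u₁} {R₂ : Type u₂} [Ring R₁] [Ring R₂]
    (F : ModuleCat.{v} R₁ ⥤ ModuleCat.{v} R₂) [F.Additive] [F.Full] [F.Faithful]
    {S : ModuleCat.{v} R₁} (h : IsBrick S) : IsBrick (F.obj S) := by
  constructor
  · intro h0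
    apply h.1
    apply F.map_injective
    rw [F.map_id, F.map_zero, h0]
  · intro f hf
    obtain ⟨g, rfl⟩ := F.map_surjective f
    have hg : g ≠ 0 := fun h0 => hf (by rw [h0, F.map_zero])
    have := h.2 g hg
    infer_instance

/-- Gluing of semibricks: given adjoint pairs `(i^*, i_*)`, `(i_*, i^!)` with `i_*` fully
faithful, and a fully faithful functor `J : mod C → mod B` with `i^* ∘ J = 0` and
`i^! ∘ J = 0`, the union of the images of a semibrick of `mod A` under `i_*` and of a
semibrick of `mod C` under `J` is a semibrick of `mod B`. -/
theorem glued_semibrick {A : Type u₁} {B : Type u₂} {C : Type u₃}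
    [Ring A] [Ring B] [Ring C]
    (iUpperStar : ModuleCat.{v} B ⥤ ModuleCat.{v} A)
    (iStar : ModuleCat.{v} A ⥤ ModuleCat.{v} B)
    (iShriek : ModuleCat.{v} B ⥤ ModuleCat.{v} A)
    [iUpperStar.Additive] [iStar.Additive] [iShriek.Additive]
    [iStar.Full] [iStar.Faithful]
    (adj₁ : iUpperStar ⊣ iStar) (adj₂ : iStar ⊣ iShriek)
    (J : ModuleCat.{v} C ⥤ ModuleCat.{v} B) [J.Additive] [J.Full] [J.Faithful]
    (hJ₁ : ∀ Y : ModuleCat.{v} C, IsZero (iUpperStar.obj (J.obj Y)))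
    (hJ₂ : ∀ Y : ModuleCat.{v} C, IsZero (iShriek.obj (J.obj Y)))
    (𝒮L : Set (ModuleCat.{v} A)) (𝒮R : Set (ModuleCat.{v} C))
    (hL : IsSemibrick 𝒮L) (hR : IsSemibrick 𝒮R) :
    IsSemibrick (iStar.obj '' 𝒮L ∪ J.obj '' 𝒮R) := by
  have hcross₁ : ∀ (S : ModuleCat.{v} A) (T : ModuleCat.{v} C)
      (f : iStar.obj S ⟶ J.obj T), f = 0 := by
    intro S T f
    have h := (adj₂.homEquiv S (J.obj T)).symm_apply_apply f
    rw [← h, Adjunction.homEquiv_counit, (hJ₂ T).eq_zero_of_tgt (adj₂.homEquiv _ _ f),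
      iStar.map_zero, zero_comp]
  have hcross₂ : ∀ (T : ModuleCat.{v} C) (S : ModuleCat.{v} A)
      (f : J.obj T ⟶ iStar.obj S), f = 0 := by
    intro T S f
    have h := (adj₁.homEquiv (J.obj T) S).apply_symm_apply f
    rw [← h, Adjunction.homEquiv_unit, (hJ₁ T).eq_zero_of_src ((adj₁.homEquiv _ _).symm f),
      iStar.map_zero, comp_zero]
  constructor
  · rintro S (⟨T, hT, rfl⟩ | ⟨T, hT, rfl⟩)
    · exact (hL.1 T hT).map iStar
    · exact (hR.1 T hT).map J
  · rintro S₁ (⟨T₁, hT₁, rfl⟩ | ⟨T₁, hT₁, rfl⟩) S₂ (⟨T₂, hT₂, rfl⟩ | ⟨T₂, hT₂, rfl⟩) hniso f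
    · obtain ⟨g, rfl⟩ := iStar.map_surjective f
      rw [hL.2 T₁ hT₁ T₂ hT₂ (fun ⟨e⟩ => hniso ⟨iStar.mapIso e⟩) g, iStar.map_zero]
    · exact hcross₁ _ _ f
    · exact hcross₂ _ _ f
    · obtain ⟨g, rfl⟩ := J.map_surjective f
      rw [hR.2 T₁ hT₁ T₂ hT₂ (fun ⟨e⟩ => hniso ⟨J.mapIso e⟩) g, J.map_zero]
end

section
/- Let R(A,B,C) be a recollement of module categories such that in addition i^*(j_!(Y)) ≅ 0 and i^!(j_!(Y)) ≅ 0 for every Y in mod C. If 𝒮_L is a semibrick in mod A and 𝒮_R is a semibrick in mod C, then the union i_*(𝒮_L) ∪ j_!(𝒮_R) = {i_*(S) : S ∈ 𝒮_L} ∪ {j_!(S) : S ∈ 𝒮_R} is a semibrick in mod B. -/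
open CategoryTheory CategoryTheory.Limits

universe v u₁ u₂ u₃

/-- A recollement of `mod B` relative to `mod A` and `mod C`: six additive functors
with the four adjunctions, the three full embeddings, and the condition that the
essential image of `i_*` is the kernel of `j^*`. -/
structure ModuleRecollement (A : Type u₁) (B : Type u₂) (C : Type u₃)
    [Ring A] [Ring B] [Ring C] where
  /-- `i^* : mod B → mod A` -/
  iUpperStar : ModuleCat.{v} B ⥤ ModuleCat.{v} A
  /-- `i_* : mod A → mod B` -/
  iStar : ModuleCat.{v} A ⥤ ModuleCat.{v} B
  /-- `i^! : mod B → mod A` -/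
  iShriek : ModuleCat.{v} B ⥤ ModuleCat.{v} A
  /-- `j_! : mod C → mod B` -/
  jLowerShriek : ModuleCat.{v} C ⥤ ModuleCat.{v} B
  /-- `j^* : mod B → mod C` -/
  jUpperStar : ModuleCat.{v} B ⥤ ModuleCat.{v} C
  /-- `j_* : mod C → mod B` -/
  jStar : ModuleCat.{v} C ⥤ ModuleCat.{v} B
  iUpperStar_additive : iUpperStar.Additive
  iStar_additive : iStar.Additive
  iShriek_additive : iShriek.Additive
  jLowerShriek_additive : jLowerShriek.Additive
  jUpperStar_additive : jUpperStar.Additive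
  jStar_additive : jStar.Additive
  /-- `(i^*, i_*)` is an adjoint pair -/
  adj₁ : iUpperStar ⊣ iStar
  /-- `(i_*, i^!)` is an adjoint pair -/
  adj₂ : iStar ⊣ iShriek
  /-- `(j_!, j^*)` is an adjoint pair -/
  adj₃ : jLowerShriek ⊣ jUpperStar
  /-- `(j^*, j_*)` is an adjoint pair -/
  adj₄ : jUpperStar ⊣ jStar
  iStar_full : iStar.Full
  iStar_faithful : iStar.Faithful
  jLowerShriek_full : jLowerShriek.Full
  jLowerShriek_faithful : jLowerShriek.Faithful
  jStar_full : jStar.Full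
  jStar_faithful : jStar.Faithful
  /-- the essential image of `i_*` equals the kernel of `j^*` -/
  essImage_eq_ker : ∀ X : ModuleCat.{v} B,
    (∃ Y : ModuleCat.{v} A, Nonempty (iStar.obj Y ≅ X)) ↔ IsZero (jUpperStar.obj X)

/-- In a recollement with `i^* j_! = 0` and `i^! j_! = 0`, the union of the image of a
semibrick of `mod A` under `i_*` with the image of a semibrick of `mod C` under `j_!` is a
semibrick of `mod B`. -/
theorem glued_semibrick_jLowerShriek {A : Type u₁} {B : Type u₂} {C : Type u₃}
    [Ring A] [Ring B] [Ring C] (R : ModuleRecollement.{v} A B C)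
    (h₁ : ∀ Y : ModuleCat.{v} C, IsZero (R.iUpperStar.obj (R.jLowerShriek.obj Y)))
    (h₂ : ∀ Y : ModuleCat.{v} C, IsZero (R.iShriek.obj (R.jLowerShriek.obj Y)))
    (𝒮L : Set (ModuleCat.{v} A)) (𝒮R : Set (ModuleCat.{v} C))
    (hL : IsSemibrick 𝒮L) (hR : IsSemibrick 𝒮R) :
    IsSemibrick (R.iStar.obj '' 𝒮L ∪ R.jLowerShriek.obj '' 𝒮R) := by
  haveI := R.iStar_additive
  haveI := R.jLowerShriek_additive
  haveI := R.iStar_full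
  haveI := R.iStar_faithful
  haveI := R.jLowerShriek_full
  haveI := R.jLowerShriek_faithful
  constructor
  · rintro S (⟨X, hX, rfl⟩ | ⟨Y, hY, rfl⟩)
    · obtain ⟨b1, b2⟩ := hL.1 X hX
      refine ⟨fun h => b1 ?_, fun f hf => ?_⟩
      · apply R.iStar.map_injective
        simpa using h
      · obtain ⟨g, rfl⟩ := R.iStar.map_surjective f
        have hg : g ≠ 0 := fun hg0 => hf (by rw [hg0]; simp)
        haveI := b2 g hg
        infer_instance
    · obtain ⟨b1, b2⟩ := hR.1 Y hY
      refine ⟨fun h => b1 ?_, fun f hf => ?_⟩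
      · apply R.jLowerShriek.map_injective
        simpa using h
      · obtain ⟨g, rfl⟩ := R.jLowerShriek.map_surjective f
        have hg : g ≠ 0 := fun hg0 => hf (by rw [hg0]; simp)
        haveI := b2 g hg
        infer_instance
  · rintro S₁ (⟨X₁, hX₁, rfl⟩ | ⟨Y₁, hY₁, rfl⟩) S₂ (⟨X₂, hX₂, rfl⟩ | ⟨Y₂, hY₂, rfl⟩) hiso f
    · obtain ⟨g, rfl⟩ := R.iStar.map_surjective f
      have hne : ¬ Nonempty (X₁ ≅ X₂) := fun ⟨e⟩ => hiso ⟨R.iStar.mapIso e⟩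
      rw [hL.2 X₁ hX₁ X₂ hX₂ hne g]
      simp
    · apply (R.adj₂.homEquiv _ _).injective
      exact (h₂ Y₂).eq_of_tgt _ _
    · apply (R.adj₁.homEquiv _ _).symm.injective
      exact (h₁ Y₁).eq_of_src _ _
    · obtain ⟨g, rfl⟩ := R.jLowerShriek.map_surjective f
      have hne : ¬ Nonempty (Y₁ ≅ Y₂) := fun ⟨e⟩ => hiso ⟨R.jLowerShriek.mapIso e⟩
      rw [hR.2 Y₁ hY₁ Y₂ hY₂ hne g]
      simp
end

section
/- Let R(A,B,C) be a recollement of module categories such that in addition i^*(j_*(Y)) ≅ 0 and i^!(j_*(Y)) ≅ 0 for every Y in mod C. If 𝒮_L is a semibrick in mod A and 𝒮_R is a semibrick in mod C, then the union i_*(𝒮_L) ∪ j_*(𝒮_R) = {i_*(S) : S ∈ 𝒮_L} ∪ {j_*(S) : S ∈ 𝒮_R} is a semibrick in mod B. -/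
open CategoryTheory CategoryTheory.Limits

universe v u₁ u₂ u₃

/-- A fully faithful additive functor sends bricks to bricks. -/
theorem isBrick_map {R₁ : Type u₁} {R₂ : Type u₂} [Ring R₁] [Ring R₂]
    (F : ModuleCat.{v} R₁ ⥤ ModuleCat.{v} R₂) [F.Full] [F.Faithful] [F.Additive]
    {S : ModuleCat.{v} R₁} (hS : IsBrick S) : IsBrick (F.obj S) := by
  constructor
  · intro h
    apply hS.1
    apply F.map_injective
    rw [F.map_id, F.map_zero, h]
  · intro f hf
    obtain ⟨g, hg⟩ := F.map_surjective f
    have hg0 : g ≠ 0 := by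
      rintro rfl
      exact hf (by rw [← hg, F.map_zero])
    have := hS.2 g hg0
    rw [← hg]
    infer_instance

/-- In a recollement with `i^* j_* = 0` and `i^! j_* = 0`, the union of the image of a
semibrick of `mod A` under `i_*` with the image of a semibrick of `mod C` under `j_*` is a
semibrick of `mod B`. -/
theorem glued_semibrick_jStar {A : Type u₁} {B : Type u₂} {C : Type u₃}
    [Ring A] [Ring B] [Ring C] (R : ModuleRecollement.{v} A B C)
    (h₁ : ∀ Y : ModuleCat.{v} C, IsZero (R.iUpperStar.obj (R.jStar.obj Y)))
    (h₂ : ∀ Y : ModuleCat.{v} C, IsZero (R.iShriek.obj (R.jStar.obj Y)))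
    (𝒮L : Set (ModuleCat.{v} A)) (𝒮R : Set (ModuleCat.{v} C))
    (hL : IsSemibrick 𝒮L) (hR : IsSemibrick 𝒮R) :
    IsSemibrick (R.iStar.obj '' 𝒮L ∪ R.jStar.obj '' 𝒮R) := by
  haveI := R.iStar_additive
  haveI := R.jStar_additive
  haveI := R.iStar_full
  haveI := R.iStar_faithful
  haveI := R.jStar_full
  haveI := R.jStar_faithful
  -- zero homs across the two sides
  have hcross₁ : ∀ (X : ModuleCat.{v} A) (Y : ModuleCat.{v} C)
      (f : R.iStar.obj X ⟶ R.jStar.obj Y), f = 0 := by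
    intro X Y f
    have hz : IsZero (R.jUpperStar.obj (R.iStar.obj X)) :=
      (R.essImage_eq_ker (R.iStar.obj X)).mp ⟨X, ⟨Iso.refl _⟩⟩
    have h0 : (R.adj₄.homEquiv _ _).symm f = 0 := hz.eq_of_src _ _
    calc f = (R.adj₄.homEquiv _ _) ((R.adj₄.homEquiv _ _).symm f) := (Equiv.apply_symm_apply _ _).symm
    _ = 0 := by rw [h0, Adjunction.homEquiv_unit, Functor.map_zero, Limits.comp_zero]
  have hcross₂ : ∀ (Y : ModuleCat.{v} C) (X : ModuleCat.{v} A)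
      (f : R.jStar.obj Y ⟶ R.iStar.obj X), f = 0 := by
    intro Y X f
    have h0 : (R.adj₁.homEquiv _ _).symm f = 0 := (h₁ Y).eq_of_src _ _
    calc f = (R.adj₁.homEquiv _ _) ((R.adj₁.homEquiv _ _).symm f) := (Equiv.apply_symm_apply _ _).symm
    _ = 0 := by rw [h0, Adjunction.homEquiv_unit, Functor.map_zero, Limits.comp_zero]
  constructor
  · rintro S (⟨S₀, hS₀, rfl⟩ | ⟨S₀, hS₀, rfl⟩)
    · exact isBrick_map R.iStar (hL.1 S₀ hS₀)
    · exact isBrick_map R.jStar (hR.1 S₀ hS₀)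
  · rintro S₁ (⟨X₁, hX₁, rfl⟩ | ⟨Y₁, hY₁, rfl⟩) S₂ (⟨X₂, hX₂, rfl⟩ | ⟨Y₂, hY₂, rfl⟩) hiso f
    · obtain ⟨g, hg⟩ := R.iStar.map_surjective f
      have hniso : ¬ Nonempty (X₁ ≅ X₂) := fun ⟨e⟩ => hiso ⟨R.iStar.mapIso e⟩
      rw [← hg, hL.2 X₁ hX₁ X₂ hX₂ hniso g, Functor.map_zero]
    · exact hcross₁ X₁ Y₂ f
    · exact hcross₂ Y₁ X₂ f
    · obtain ⟨g, hg⟩ := R.jStar.map_surjective f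
      have hniso : ¬ Nonempty (Y₁ ≅ Y₂) := fun ⟨e⟩ => hiso ⟨R.jStar.mapIso e⟩
      rw [← hg, hR.2 Y₁ hY₁ Y₂ hY₂ hniso g, Functor.map_zero]
end

section
/- Let A and B be rings and let F : mod A → mod B be a fully faithful additive functor. If there are only finitely many isomorphism classes of bricks in mod B, then there are only finitely many isomorphism classes of bricks in mod A. -/
open CategoryTheory CategoryTheory.Limits

universe v u₁ u₂

/-- `mod R` has only finitely many isomorphism classes of bricks: there is a finite list of
bricks such that every brick is isomorphic to a member of the list. -/
def HasFinitelyManyBricks (R : Type u₁) [Ring R] : Prop :=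
  ∃ L : List (ModuleCat.{v} R), (∀ S ∈ L, IsBrick S) ∧
    ∀ S : ModuleCat.{v} R, IsBrick S → ∃ T ∈ L, Nonempty (S ≅ T)

/-- If there is a fully faithful additive functor `mod A → mod B` and `mod B` has only
finitely many isomorphism classes of bricks, then so does `mod A`. -/
theorem finitelyManyBricks_of_fullyFaithful {A : Type u₁} {B : Type u₂} [Ring A] [Ring B]
    (F : ModuleCat.{v} A ⥤ ModuleCat.{v} B) [F.Additive] [F.Full] [F.Faithful]
    (hB : HasFinitelyManyBricks.{v} B) : HasFinitelyManyBricks.{v} A := by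
  classical
  obtain ⟨L, hL, hcov⟩ := hB
  -- F sends bricks to bricks
  have hFbrick : ∀ S : ModuleCat.{v} A, IsBrick S → IsBrick (F.obj S) := by
    intro S ⟨h1, h2⟩
    constructor
    · intro h
      apply h1
      apply F.map_injective
      rw [F.map_id, F.map_zero, h]
    · intro g hg
      have hg' : F.preimage g ≠ 0 := by
        intro h
        apply hg
        rw [← F.map_preimage g, h, F.map_zero]
      have : IsIso (F.preimage g) := h2 _ hg'
      rw [← F.map_preimage g]
      infer_instance
  let P : ModuleCat.{v} B → Prop := fun T =>
    ∃ S : ModuleCat.{v} A, IsBrick S ∧ Nonempty (F.obj S ≅ T)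
  refine ⟨L.flatMap (fun T => if h : P T then [h.choose] else []), ?_, ?_⟩
  · intro S hS
    rw [List.mem_flatMap] at hS
    obtain ⟨T, _, hT⟩ := hS
    split at hT
    · next h =>
      rw [List.mem_singleton] at hT
      subst hT
      exact h.choose_spec.1
    · simp at hT
  · intro S hS
    obtain ⟨T, hTL, ⟨e⟩⟩ := hcov (F.obj S) (hFbrick S hS)
    have hPT : P T := ⟨S, hS, ⟨e⟩⟩
    refine ⟨hPT.choose, ?_, ?_⟩
    · rw [List.mem_flatMap]
      exact ⟨T, hTL, by rw [dif_pos hPT]; simp⟩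
    · obtain ⟨e'⟩ := hPT.choose_spec.2
      exact ⟨F.preimageIso (e ≪≫ e'.symm)⟩
end
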